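/- For every n ≥ 2, A'_{2n} = A_n and A'_{2n−1} = B_n; that is, the number of downward patterns of size 2n in T equals the number of upward patterns of size n in T, and the number of downward patterns of size 2n−1 in T equals the number of top-cut patterns of size n in T. -/

import Mathlib

/-- Whether the unit triangle at row `r`, column `c` of the Sierpiński triangle is filled:
upward units `(r, 2j)` are filled iff `choose r j` is odd; downward units are unfilled. -/
def filled (r c : ℕ) : Bool :=
  decide (c % 2 = 0 ∧ Nat.choose r (c / 2) % 2 = 1)

/-- The upward pattern of size `n` at upward position `(r, c)`. -/
def upPattern (n r c : ℕ) : ℕ × ℕ → Bool := fun q =>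
  if q.1 < n ∧ q.2 ≤ 2 * q.1 then filled (r + q.1) (c + q.2) else false

/-- The set of all upward patterns of size `n` occurring in the Sierpiński triangle. -/
def Pup (n : ℕ) : Set (ℕ × ℕ → Bool) :=
  { p | ∃ r c : ℕ, c % 2 = 0 ∧ c ≤ 2 * r ∧ p = upPattern n r c }

/-- The downward pattern of size `n` at downward position `(r, c)`. -/
def downPattern (n r c : ℕ) : ℕ × ℕ → Bool := fun q =>
  if q.1 < n ∧ q.2 ≤ 2 * (n - 1 - q.1) then filled (r + q.1) (c + 2 * q.1 + q.2) else false

/-- The set of all downward patterns of size `n` occurring in the Sierpiński triangle. -/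
def Pdown (n : ℕ) : Set (ℕ × ℕ → Bool) :=
  { p | ∃ r c : ℕ, c % 2 = 1 ∧ c + 2 * (n - 1) ≤ 2 * r ∧ p = downPattern n r c }

/-- The top-cut pattern of size `n` at upward position `(r, c)` (apex unit removed). -/
def topCutPattern (n r c : ℕ) : ℕ × ℕ → Bool := fun q =>
  if 1 ≤ q.1 ∧ q.1 < n ∧ q.2 ≤ 2 * q.1 then filled (r + q.1) (c + q.2) else false

/-- The set of all top-cut patterns of size `n` occurring in the Sierpiński triangle. -/
def PtopCut (n : ℕ) : Set (ℕ × ℕ → Bool) :=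
  { p | ∃ r c : ℕ, c % 2 = 0 ∧ c ≤ 2 * r ∧ p = topCutPattern n r c }

/-- The bottom-cut pattern of size `n` at upward position `(r, c)`
(both bottom corner units removed). -/
def botCutPattern (n r c : ℕ) : ℕ × ℕ → Bool := fun q =>
  if (q.1 < n ∧ q.2 ≤ 2 * q.1) ∧ ¬(q.1 = n - 1 ∧ (q.2 = 0 ∨ q.2 = 2 * (n - 1)))
  then filled (r + q.1) (c + q.2) else false

/-- The set of all bottom-cut patterns of size `n` occurring in the Sierpiński triangle. -/
def PbotCut (n : ℕ) : Set (ℕ × ℕ → Bool) :=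
  { p | ∃ r c : ℕ, c % 2 = 0 ∧ c ≤ 2 * r ∧ p = botCutPattern n r c }

/-- The fully-cut pattern of size `n` at upward position `(r, c)`
(all three corner units removed). -/
def fullyCutPattern (n r c : ℕ) : ℕ × ℕ → Bool := fun q =>
  if (q.1 < n ∧ q.2 ≤ 2 * q.1) ∧ q ≠ (0, 0) ∧ ¬(q.1 = n - 1 ∧ (q.2 = 0 ∨ q.2 = 2 * (n - 1)))
  then filled (r + q.1) (c + q.2) else false

/-- The set of all fully-cut patterns of size `n` occurring in the Sierpiński triangle. -/
def PfullyCut (n : ℕ) : Set (ℕ × ℕ → Bool) :=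
  { p | ∃ r c : ℕ, c % 2 = 0 ∧ c ≤ 2 * r ∧ p = fullyCutPattern n r c }

/-- Upward patterns of size `m` occurring inside the approximation `T_N`
(rows `0, …, 2^N - 1`). -/
def PupN (N m : ℕ) : Set (ℕ × ℕ → Bool) :=
  { p | ∃ r c : ℕ, c % 2 = 0 ∧ c ≤ 2 * r ∧ r + m ≤ 2 ^ N ∧ p = upPattern m r c }

/-- Upward patterns of size `n` at positions with `r ≡ ρ [MOD 2]` and `c ≡ γ [MOD 4]`. -/
def PupRC (n ρ γ : ℕ) : Set (ℕ × ℕ → Bool) :=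
  { p | ∃ r c : ℕ, c % 2 = 0 ∧ c ≤ 2 * r ∧ r % 2 = ρ ∧ c % 4 = γ ∧ p = upPattern n r c }

/-- Downward patterns of size `n` at positions with `r ≡ ρ [MOD 2]` and `c ≡ γ [MOD 4]`. -/
def PdownRC (n ρ γ : ℕ) : Set (ℕ × ℕ → Bool) :=
  { p | ∃ r c : ℕ, c % 2 = 1 ∧ c + 2 * (n - 1) ≤ 2 * r ∧ r % 2 = ρ ∧ c % 4 = γ ∧
      p = downPattern n r c }

/-- Top-cut patterns of size `n` at positions with `r ≡ ρ [MOD 2]` and `c ≡ γ [MOD 4]`. -/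
def PtopCutRC (n ρ γ : ℕ) : Set (ℕ × ℕ → Bool) :=
  { p | ∃ r c : ℕ, c % 2 = 0 ∧ c ≤ 2 * r ∧ r % 2 = ρ ∧ c % 4 = γ ∧ p = topCutPattern n r c }

/-- Fully-cut patterns of size `n` at positions with `r ≡ ρ [MOD 2]` and `c ≡ γ [MOD 4]`. -/
def PfullyCutRC (n ρ γ : ℕ) : Set (ℕ × ℕ → Bool) :=
  { p | ∃ r c : ℕ, c % 2 = 0 ∧ c ≤ 2 * r ∧ r % 2 = ρ ∧ c % 4 = γ ∧ p = fullyCutPattern n r c }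

/-- The everywhere-unfilled upward pattern. -/
def blankUp : ℕ × ℕ → Bool := fun _ => false

/-- The upward pattern that is filled exactly at the apex `(0, 0)`. -/
def topUp : ℕ × ℕ → Bool := fun q => decide (q = (0, 0))

/-- The size-`N` upward pattern that is filled exactly at the bottom-left corner `(N-1, 0)`. -/
def botleftUp (N : ℕ) : ℕ × ℕ → Bool := fun q => decide (q = (N - 1, 0))

/-- The size-`N` upward pattern filled exactly at the bottom-right corner `(N-1, 2(N-1))`. -/
def botrightUp (N : ℕ) : ℕ × ℕ → Bool := fun q => decide (q = (N - 1, 2 * (N - 1)))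

/-- The everywhere-unfilled downward pattern. -/
def blankDown : ℕ × ℕ → Bool := fun _ => false

/-- The size-`N` downward pattern filled exactly at the upward units along the top side:
positions `(0, m)` with `m` odd, `1 ≤ m ≤ 2N - 3`. -/
def topsideDown (N : ℕ) : ℕ × ℕ → Bool := fun q =>
  decide (q.1 = 0 ∧ q.2 % 2 = 1 ∧ 1 ≤ q.2 ∧ q.2 ≤ 2 * N - 3)

/-- The size-`N` downward pattern filled exactly at the upward units along the left side:
positions `(k, 1)` with `0 ≤ k ≤ N - 2`. -/
def leftsideDown (N : ℕ) : ℕ × ℕ → Bool := fun q =>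
  decide (q.2 = 1 ∧ q.1 ≤ N - 2)

/-- The size-`N` downward pattern filled exactly at the upward units along the right side:
positions `(k, 2(N-1-k) - 1)` with `0 ≤ k ≤ N - 2`. -/
def rightsideDown (N : ℕ) : ℕ × ℕ → Bool := fun q =>
  decide (q.1 ≤ N - 2 ∧ q.2 = 2 * (N - 1 - q.1) - 1)


open Finset

local notation "Z2" => ZMod 2

def cb (r j : ℕ) : ZMod 2 := (r.choose j : ZMod 2)

lemma natCast_zmod2_eq_iff (a b : ℕ) : (a : Z2) = (b : Z2) ↔ a % 2 = b % 2 := by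
  rw [ZMod.natCast_eq_natCast_iff]; exact Iff.rfl

lemma if_mod_cast (a : ℕ) : (if a % 2 = 1 then (1 : Z2) else 0) = (a : Z2) := by
  rw [← ZMod.natCast_mod a 2]
  rcases Nat.mod_two_eq_zero_or_one a with h | h <;> simp [h]

lemma cb_pascal (r x : ℕ) : cb (r + 1) (x + 1) = cb r x + cb r (x + 1) := by
  unfold cb
  rw [Nat.choose_succ_succ]
  push_cast
  ring

lemma cb_zero (r : ℕ) : cb r 0 = 1 := by simp [cb]

lemma cb_eq_one_iff (r j : ℕ) : cb r j = 1 ↔ r.choose j % 2 = 1 := by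
  unfold cb
  rw [show (1 : Z2) = ((1 : ℕ) : Z2) by norm_num, natCast_zmod2_eq_iff]

/-- Vandermonde's identity specialized mod 2. -/
lemma vand (k r x : ℕ) :
    cb (k + r) x = ∑ i ∈ range (k + 1),
      (if i ≤ x then (k.choose i : Z2) * cb r (x - i) else 0) := by
  unfold cb
  rw [Nat.add_choose_eq]
  push_cast
  rw [Nat.sum_antidiagonal_eq_sum_range_succ_mk]
  have h1 : ∀ i ∈ range (x + 1),
      ((k.choose i : Z2) * ((r.choose (x - i) : ℕ) : Z2)) =
      (if i ≤ x then (k.choose i : Z2) * ((r.choose (x - i) : ℕ) : Z2) else 0) := by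
    intro i hi
    rw [if_pos (by simpa using Nat.lt_succ_iff.mp (mem_range.mp hi))]
  rw [Finset.sum_congr rfl h1]
  -- both sides equal the sum over range (max (x+1) (k+1))
  set g : ℕ → Z2 := fun i =>
    (if i ≤ x then (k.choose i : Z2) * ((r.choose (x - i) : ℕ) : Z2) else 0) with hg
  have key : ∀ M, x + 1 ≤ M → k + 1 ≤ M → ∑ i ∈ range (x+1), g i = ∑ i ∈ range (k+1), g i := by
    intro M hxM hkM
    have e1 : ∑ i ∈ range (x+1), g i = ∑ i ∈ range M, g i := by
      apply Finset.sum_subset (by simp [Finset.range_subset]; omega)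
      intro i _ hi
      simp only [mem_range, not_lt] at hi
      simp [hg, if_neg (by omega : ¬ i ≤ x)]
    have e2 : ∑ i ∈ range (k+1), g i = ∑ i ∈ range M, g i := by
      apply Finset.sum_subset (by simp [Finset.range_subset]; omega)
      intro i _ hi
      simp only [mem_range, not_lt] at hi
      have : k.choose i = 0 := Nat.choose_eq_zero_of_lt (by omega)
      simp [hg, this]
    rw [e1, ← e2]
  exact key (max (x+1) (k+1)) (le_max_left _ _) (le_max_right _ _)

/-! ### Word machinery -/

def rowWordB (L r e : ℕ) : ℕ → Bool := fun t => decide (t < L ∧ r.choose (e + t) % 2 = 1)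

def upWordB (n R J : ℕ) : ℕ → Bool := fun t =>
  decide (t < 2 * n - 1 ∧ n - 1 ≤ J + t ∧ R.choose (J + t - (n - 1)) % 2 = 1)

def topWordB (n R J : ℕ) : ℕ → Bool := fun t =>
  decide (t < 2 * n - 2 ∧ n - 2 ≤ J + t ∧ (R + 1).choose (J + t - (n - 2)) % 2 = 1)

def wsum (k b : ℕ) (w : ℕ → Bool) : ZMod 2 :=
  ∑ i ∈ Finset.range (k + 1), (k.choose i : ZMod 2) * (if w (b - i) then 1 else 0)

def FDown (m : ℕ) (w : ℕ → Bool) : ℕ × ℕ → Bool := fun q =>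
  decide (q.1 < m ∧ q.2 ≤ 2 * (m - 1 - q.1) ∧ q.2 % 2 = 1 ∧
    wsum q.1 (q.1 + (q.2 - 1) / 2) w = 1)

def FUp (n : ℕ) (w : ℕ → Bool) : ℕ × ℕ → Bool := fun q =>
  decide (q.1 < n ∧ q.2 ≤ 2 * q.1 ∧ q.2 % 2 = 0 ∧ wsum q.1 (n - 1 + q.2 / 2) w = 1)

def FTop (n : ℕ) (w : ℕ → Bool) : ℕ × ℕ → Bool := fun q =>
  decide (1 ≤ q.1 ∧ q.1 < n ∧ q.2 ≤ 2 * q.1 ∧ q.2 % 2 = 0 ∧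
    wsum (q.1 - 1) (n - 2 + q.2 / 2) w = 1)

def readDown : (ℕ × ℕ → Bool) → (ℕ → Bool) := fun p t => p (0, 2 * t + 1)

lemma filled_even (r x : ℕ) : filled r (2 * x) = decide (r.choose x % 2 = 1) := by
  simp [filled, Nat.mul_div_cancel_left, Nat.mul_mod_right]

lemma filled_odd (r x : ℕ) : filled r (2 * x + 1) = false := by
  simp [filled, Nat.mul_add_mod]

lemma if_bool_cast (a : ℕ) : (if (decide (a % 2 = 1) : Bool) then (1 : Z2) else 0) = (a : Z2) := by
  rw [← if_mod_cast a]
  simp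

/-! ### wsum evaluation lemmas -/

lemma wsum_down (m r e k t : ℕ) (hkt : k + t ≤ m - 2) (hm : 2 ≤ m) :
    wsum k (k + t) (rowWordB (m - 1) r e) = cb (r + k) (e + k + t) := by
  rw [show r + k = k + r from add_comm r k, vand k r (e + k + t)]
  unfold wsum
  apply Finset.sum_congr rfl
  intro i hi
  have hik : i ≤ k := Nat.lt_succ_iff.mp (Finset.mem_range.mp hi)
  rw [if_pos (by omega : i ≤ e + k + t)]
  have h1 : rowWordB (m - 1) r e (k + t - i) = decide (r.choose (e + k + t - i) % 2 = 1) := by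
    unfold rowWordB
    rw [show e + (k + t - i) = e + k + t - i by omega]
    simp [show k + t - i < m - 1 by omega]
  rw [h1, if_bool_cast]
  rfl

lemma wsum_up (n R J k j : ℕ) (hk : k < n) (hj : j ≤ k) :
    wsum k (n - 1 + j) (upWordB n R J) = cb (R + k) (J + j) := by
  rw [show R + k = k + R from add_comm R k, vand k R (J + j)]
  unfold wsum
  apply Finset.sum_congr rfl
  intro i hi
  have hik : i ≤ k := Nat.lt_succ_iff.mp (Finset.mem_range.mp hi)
  by_cases hJ : i ≤ J + j
  · rw [if_pos hJ]
    have h1 : upWordB n R J (n - 1 + j - i) = decide (R.choose (J + j - i) % 2 = 1) := by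
      unfold upWordB
      have e2 : n - 1 ≤ J + (n - 1 + j - i) := by omega
      have e3 : J + (n - 1 + j - i) - (n - 1) = J + j - i := by omega
      rw [e3]
      simp [show n - 1 + j - i < 2 * n - 1 by omega, e2]
    rw [h1, if_bool_cast]
    rfl
  · rw [if_neg hJ]
    have h1 : upWordB n R J (n - 1 + j - i) = false := by
      unfold upWordB
      simp only [decide_eq_false_iff_not]
      intro h
      exact absurd h.2.1 (by omega)
    rw [h1]
    simp

lemma wsum_top (n R J k j : ℕ) (hk1 : 1 ≤ k) (hk : k < n) (hj : j ≤ k) (hn : 2 ≤ n) :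
    wsum (k - 1) (n - 2 + j) (topWordB n R J) = cb (R + k) (J + j) := by
  rw [show R + k = (k - 1) + (R + 1) by omega, vand (k - 1) (R + 1) (J + j)]
  unfold wsum
  apply Finset.sum_congr rfl
  intro i hi
  have hik : i ≤ k - 1 := Nat.lt_succ_iff.mp (Finset.mem_range.mp hi)
  by_cases hJ : i ≤ J + j
  · rw [if_pos hJ]
    have h1 : topWordB n R J (n - 2 + j - i) = decide ((R + 1).choose (J + j - i) % 2 = 1) := by
      unfold topWordB
      have e2 : n - 2 ≤ J + (n - 2 + j - i) := by omega
      have e3 : J + (n - 2 + j - i) - (n - 2) = J + j - i := by omega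
      rw [e3]
      simp [show n - 2 + j - i < 2 * n - 2 by omega, e2]
    rw [h1, if_bool_cast]
    rfl
  · rw [if_neg hJ]
    have h1 : topWordB n R J (n - 2 + j - i) = false := by
      unfold topWordB
      simp only [decide_eq_false_iff_not]
      intro h
      exact absurd h.2.1 (by omega)
    rw [h1]
    simp

/-! ### Evaluation lemmas: patterns are determined by words -/

lemma FDown_eval (m r e : ℕ) (he : 1 ≤ e) (hm : 2 ≤ m) :
    FDown m (rowWordB (m - 1) r e) = downPattern m r (2 * e - 1) := by
  funext q
  obtain ⟨k, m2⟩ := q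
  simp only [FDown, downPattern]
  by_cases h1 : k < m ∧ m2 ≤ 2 * (m - 1 - k)
  · rw [if_pos h1]
    by_cases h2 : m2 % 2 = 1
    · obtain ⟨t, rfl⟩ : ∃ t, m2 = 2 * t + 1 := ⟨(m2 - 1) / 2, by omega⟩
      rw [show 2 * e - 1 + 2 * k + (2 * t + 1) = 2 * (e + k + t) by omega, filled_even]
      rw [show k + (2 * t + 1 - 1) / 2 = k + t by omega]
      rw [wsum_down m r e k t (by omega) hm]
      simp only [decide_eq_decide]
      rw [cb_eq_one_iff]
      constructor
      · exact fun h => h.2.2.2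
      · exact fun h => ⟨h1.1, h1.2, by omega, h⟩
    · obtain ⟨t, rfl⟩ : ∃ t, m2 = 2 * t := ⟨m2 / 2, by omega⟩
      rw [show 2 * e - 1 + 2 * k + 2 * t = 2 * (e + k + t - 1) + 1 by omega, filled_odd]
      simp only [decide_eq_false_iff_not]
      intro h
      exact h2 h.2.2.1
  · rw [if_neg h1]
    simp only [decide_eq_false_iff_not]
    intro h
    exact h1 ⟨h.1, h.2.1⟩

lemma FUp_eval (n R J : ℕ) (hn : 1 ≤ n) :
    FUp n (upWordB n R J) = upPattern n R (2 * J) := by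
  funext q
  obtain ⟨k, m2⟩ := q
  simp only [FUp, upPattern]
  by_cases h1 : k < n ∧ m2 ≤ 2 * k
  · rw [if_pos h1]
    by_cases h2 : m2 % 2 = 0
    · obtain ⟨j, rfl⟩ : ∃ j, m2 = 2 * j := ⟨m2 / 2, by omega⟩
      rw [show 2 * J + 2 * j = 2 * (J + j) by omega, filled_even]
      rw [show n - 1 + 2 * j / 2 = n - 1 + j by omega]
      rw [wsum_up n R J k j h1.1 (by omega)]
      simp only [decide_eq_decide]
      rw [cb_eq_one_iff]
      constructor
      · exact fun h => h.2.2.2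
      · exact fun h => ⟨h1.1, h1.2, by omega, h⟩
    · obtain ⟨j, rfl⟩ : ∃ j, m2 = 2 * j + 1 := ⟨m2 / 2, by omega⟩
      rw [show 2 * J + (2 * j + 1) = 2 * (J + j) + 1 by omega, filled_odd]
      simp only [decide_eq_false_iff_not]
      intro h
      exact h2 h.2.2.1
  · rw [if_neg h1]
    simp only [decide_eq_false_iff_not]
    intro h
    exact h1 ⟨h.1, h.2.1⟩

lemma FTop_eval (n R J : ℕ) (hn : 2 ≤ n) :
    FTop n (topWordB n R J) = topCutPattern n R (2 * J) := by
  funext q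
  obtain ⟨k, m2⟩ := q
  simp only [FTop, topCutPattern]
  by_cases h1 : 1 ≤ k ∧ k < n ∧ m2 ≤ 2 * k
  · rw [if_pos h1]
    by_cases h2 : m2 % 2 = 0
    · obtain ⟨j, rfl⟩ : ∃ j, m2 = 2 * j := ⟨m2 / 2, by omega⟩
      rw [show 2 * J + 2 * j = 2 * (J + j) by omega, filled_even]
      rw [show n - 2 + 2 * j / 2 = n - 2 + j by omega]
      rw [wsum_top n R J k j h1.1 h1.2.1 (by omega) hn]
      simp only [decide_eq_decide]
      rw [cb_eq_one_iff]
      constructor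
      · exact fun h => h.2.2.2.2
      · exact fun h => ⟨h1.1, h1.2.1, h1.2.2, by omega, h⟩
    · obtain ⟨j, rfl⟩ : ∃ j, m2 = 2 * j + 1 := ⟨m2 / 2, by omega⟩
      rw [show 2 * J + (2 * j + 1) = 2 * (J + j) + 1 by omega, filled_odd]
      simp only [decide_eq_false_iff_not]
      intro h
      exact h2 h.2.2.2.1
  · rw [if_neg h1]
    simp only [decide_eq_false_iff_not]
    intro h
    exact h1 ⟨h.1, h.2.1, h.2.2.1⟩

/-! ### Propagation: a pattern determines its word -/

lemma z2_rearrange {a b c : ZMod 2} (h : a = b + c) : b = a + c := by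
  rw [h, add_assoc, CharTwo.add_self_eq_zero, add_zero]

lemma propag (κ δ : ℕ) (v v' : ℕ → ℕ → ZMod 2)
    (hv : ∀ k m, v (k + 1) (m + 1) = v k (m + 1) + v k m)
    (hv' : ∀ k m, v' (k + 1) (m + 1) = v' k (m + 1) + v' k m)
    (hc : ∀ k j, k ≤ κ → j ≤ k + δ → v k (κ + j) = v' k (κ + j)) :
    ∀ m, m ≤ 2 * κ + δ → v 0 m = v' 0 m := by
  have main : ∀ d k, κ ≤ k + d → k ≤ κ → ∀ m, k ≤ m → m ≤ 2 * κ + δ → v k m = v' k m := by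
    intro d
    induction d with
    | zero =>
      intro k hkd hk m hkm hm
      have hkκ : k = κ := by omega
      subst hkκ
      have := hc k (m - k) (le_refl _) (by omega)
      rwa [show k + (m - k) = m by omega] at this
    | succ d ih =>
      intro k hkd hk m hkm hm
      by_cases hd : κ ≤ k + d
      · exact ih k hd hk m hkm hm
      · -- here k + d + 1 = κ, so k + 1 ≤ κ
        have hk1 : k + 1 ≤ κ := by omega
        have levelIH : ∀ m, k + 1 ≤ m → m ≤ 2 * κ + δ → v (k + 1) m = v' (k + 1) m :=
          ih (k + 1) (by omega) hk1
        -- A : for m ≥ κ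
        have A : ∀ s, κ + s ≤ 2 * κ + δ → v k (κ + s) = v' k (κ + s) := by
          intro s
          induction s with
          | zero => intro _; exact hc k 0 hk (by omega)
          | succ s ihs =>
            intro hs
            by_cases hsk : s + 1 ≤ k + δ
            · exact hc k (s + 1) hk hsk
            · have e1 := z2_rearrange (hv k (κ + s))
              have e2 := z2_rearrange (hv' k (κ + s))
              rw [show κ + (s + 1) = κ + s + 1 by omega, e1, e2,
                levelIH (κ + s + 1) (by omega) (by omega), ihs (by omega)]
        -- B : for m ≤ κ, descending
        have B : ∀ s, s ≤ κ - k → v k (κ - s) = v' k (κ - s) := by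
          intro s
          induction s with
          | zero => simpa using A 0 (by omega)
          | succ s ihs =>
            intro hs
            have hm1 : κ - s = (κ - (s + 1)) + 1 := by omega
            have e1 : v k (κ - (s + 1)) = v (k + 1) (κ - s) + v k (κ - s) := by
              have := hv k (κ - (s + 1))
              rw [← hm1] at this
              exact z2_rearrange (by rw [this]; ring)
            have e2 : v' k (κ - (s + 1)) = v' (k + 1) (κ - s) + v' k (κ - s) := by
              have := hv' k (κ - (s + 1))
              rw [← hm1] at this
              exact z2_rearrange (by rw [this]; ring)
            rw [e1, e2, levelIH (κ - s) (by omega) (by omega), ihs (by omega)]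
        by_cases hmκ : κ ≤ m
        · have := A (m - κ) (by omega)
          rwa [show κ + (m - κ) = m by omega] at this
        · have := B (κ - m) (by omega)
          rwa [show κ - (κ - m) = m by omega] at this
  intro m hm
  exact main κ 0 (by omega) (by omega) m (by omega) hm

lemma cb_from_parity_iff {a b : ℕ} (h : (a % 2 = 1) ↔ (b % 2 = 1)) : (a : Z2) = (b : Z2) := by
  rw [natCast_zmod2_eq_iff]
  rcases Nat.mod_two_eq_zero_or_one a with h1 | h1 <;>
    rcases Nat.mod_two_eq_zero_or_one b with h2 | h2 <;>
      rw [h1, h2] <;> simp [h1, h2] at h ⊢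

lemma genv_rel (b R J k m : ℕ) :
    (if b ≤ J + (m + 1) then cb (R + (k + 1)) (J + (m + 1) - b) else 0)
  = (if b ≤ J + (m + 1) then cb (R + k) (J + (m + 1) - b) else 0)
  + (if b ≤ J + m then cb (R + k) (J + m - b) else 0) := by
  by_cases h1 : b ≤ J + m
  · rw [if_pos (by omega), if_pos (by omega), if_pos h1]
    have e : J + (m + 1) - b = (J + m - b) + 1 := by omega
    rw [e, show R + (k + 1) = (R + k) + 1 by ring, cb_pascal]
    ring
  · by_cases h2 : b ≤ J + (m + 1)
    · rw [if_pos h2, if_pos h2, if_neg h1]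
      have e : J + (m + 1) - b = 0 := by omega
      rw [e, cb_zero, cb_zero, add_zero]
    · rw [if_neg h2, if_neg h2, if_neg h1]; ring

lemma up_word_inj (n R J R' J' : ℕ) (hn : 1 ≤ n)
    (h : upPattern n R (2 * J) = upPattern n R' (2 * J')) :
    upWordB n R J = upWordB n R' J' := by
  have hw := propag (n - 1) 0
    (fun k m => if n - 1 ≤ J + m then cb (R + k) (J + m - (n - 1)) else 0)
    (fun k m => if n - 1 ≤ J' + m then cb (R' + k) (J' + m - (n - 1)) else 0)
    (fun k m => genv_rel (n - 1) R J k m)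
    (fun k m => genv_rel (n - 1) R' J' k m)
    (by
      intro k j hk hj
      have hmain := congrFun h (k, 2 * j)
      simp only [upPattern] at hmain
      rw [if_pos ⟨by omega, by omega⟩, if_pos ⟨by omega, by omega⟩] at hmain
      rw [show 2 * J + 2 * j = 2 * (J + j) by ring,
        show 2 * J' + 2 * j = 2 * (J' + j) by ring, filled_even, filled_even] at hmain
      have hiff := decide_eq_decide.mp hmain
      rw [if_pos (by omega : n - 1 ≤ J + (n - 1 + j)),
        if_pos (by omega : n - 1 ≤ J' + (n - 1 + j)),
        show J + (n - 1 + j) - (n - 1) = J + j by omega,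
        show J' + (n - 1 + j) - (n - 1) = J' + j by omega]
      exact cb_from_parity_iff hiff)
  funext t
  by_cases ht : t < 2 * n - 1
  · have h0 := hw t (by omega)
    rw [show R + 0 = R by ring, show R' + 0 = R' by ring] at h0
    unfold upWordB
    rw [decide_eq_decide]
    constructor
    · rintro ⟨-, hg, hp⟩
      rw [if_pos hg] at h0
      rw [(cb_eq_one_iff _ _).mpr hp] at h0
      by_cases hg' : n - 1 ≤ J' + t
      · rw [if_pos hg'] at h0
        exact ⟨ht, hg', (cb_eq_one_iff _ _).mp h0.symm⟩
      · rw [if_neg hg'] at h0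
        exact absurd h0 one_ne_zero
    · rintro ⟨-, hg, hp⟩
      rw [if_pos hg] at h0
      rw [(cb_eq_one_iff _ _).mpr hp] at h0
      by_cases hg' : n - 1 ≤ J + t
      · rw [if_pos hg'] at h0
        exact ⟨ht, hg', (cb_eq_one_iff _ _).mp h0⟩
      · rw [if_neg hg'] at h0
        exact absurd h0 (by simp)
  · simp [upWordB, ht]

lemma top_word_inj (n R J R' J' : ℕ) (hn : 2 ≤ n)
    (h : topCutPattern n R (2 * J) = topCutPattern n R' (2 * J')) :
    topWordB n R J = topWordB n R' J' := by
  have hw := propag (n - 2) 1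
    (fun k m => if n - 2 ≤ J + m then cb ((R + 1) + k) (J + m - (n - 2)) else 0)
    (fun k m => if n - 2 ≤ J' + m then cb ((R' + 1) + k) (J' + m - (n - 2)) else 0)
    (fun k m => genv_rel (n - 2) (R + 1) J k m)
    (fun k m => genv_rel (n - 2) (R' + 1) J' k m)
    (by
      intro k j hk hj
      have hmain := congrFun h (k + 1, 2 * j)
      simp only [topCutPattern] at hmain
      rw [if_pos ⟨by omega, by omega, by omega⟩, if_pos ⟨by omega, by omega, by omega⟩] at hmain
      rw [show 2 * J + 2 * j = 2 * (J + j) by ring,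
        show 2 * J' + 2 * j = 2 * (J' + j) by ring, filled_even, filled_even] at hmain
      have hiff := decide_eq_decide.mp hmain
      rw [if_pos (by omega : n - 2 ≤ J + (n - 2 + j)),
        if_pos (by omega : n - 2 ≤ J' + (n - 2 + j)),
        show J + (n - 2 + j) - (n - 2) = J + j by omega,
        show J' + (n - 2 + j) - (n - 2) = J' + j by omega,
        show (R + 1) + k = R + (k + 1) by ring, show (R' + 1) + k = R' + (k + 1) by ring]
      exact cb_from_parity_iff hiff)
  funext t
  by_cases ht : t < 2 * n - 2
  · have h0 := hw t (by omega)
    rw [show R + 1 + 0 = R + 1 by ring, show R' + 1 + 0 = R' + 1 by ring] at h0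
    unfold topWordB
    rw [decide_eq_decide]
    constructor
    · rintro ⟨-, hg, hp⟩
      rw [if_pos hg] at h0
      rw [(cb_eq_one_iff _ _).mpr hp] at h0
      by_cases hg' : n - 2 ≤ J' + t
      · rw [if_pos hg'] at h0
        exact ⟨ht, hg', (cb_eq_one_iff _ _).mp h0.symm⟩
      · rw [if_neg hg'] at h0
        exact absurd h0 one_ne_zero
    · rintro ⟨-, hg, hp⟩
      rw [if_pos hg] at h0
      rw [(cb_eq_one_iff _ _).mpr hp] at h0
      by_cases hg' : n - 2 ≤ J + t
      · rw [if_pos hg'] at h0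
        exact ⟨ht, hg', (cb_eq_one_iff _ _).mp h0⟩
      · rw [if_neg hg'] at h0
        exact absurd h0 (by simp)
  · simp [topWordB, ht]

/-! ### Lucas' theorem for powers of two -/

lemma lucas_step (a b : ℕ) :
    (a.choose b : Z2) = ((a % 2).choose (b % 2) : Z2) * ((a / 2).choose (b / 2) : Z2) := by
  have h := Choose.choose_modEq_choose_mod_mul_choose_div (n := a) (k := b) (p := 2)
  rw [← ZMod.intCast_eq_intCast_iff] at h
  push_cast at h
  exact_mod_cast h

lemma lucas_pow (K : ℕ) : ∀ a b R y : ℕ, R < 2 ^ K → y < 2 ^ K →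
    ((2 ^ K * a + R).choose (2 ^ K * b + y) : Z2) = (a.choose b : Z2) * (R.choose y : Z2) := by
  induction K with
  | zero =>
    intro a b R y hR hy
    interval_cases R
    interval_cases y
    simp
  | succ K ih =>
    intro a b R y hR hy
    have hP : (0:ℕ) < 2 ^ K := Nat.pow_pos (by norm_num)
    have e2 : (2 : ℕ) ^ (K + 1) = 2 * 2 ^ K := by ring
    have en : 2 ^ (K + 1) * a + R = 2 * (2 ^ K * a) + R := by rw [e2]; ring
    have ek : 2 ^ (K + 1) * b + y = 2 * (2 ^ K * b) + y := by rw [e2]; ring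
    have hmodn : (2 ^ (K + 1) * a + R) % 2 = R % 2 := by rw [en, Nat.mul_add_mod]
    have hmodk : (2 ^ (K + 1) * b + y) % 2 = y % 2 := by rw [ek, Nat.mul_add_mod]
    have hdivn : (2 ^ (K + 1) * a + R) / 2 = 2 ^ K * a + R / 2 := by
      rw [en, Nat.mul_add_div (by norm_num)]
    have hdivk : (2 ^ (K + 1) * b + y) / 2 = 2 ^ K * b + y / 2 := by
      rw [ek, Nat.mul_add_div (by norm_num)]
    have h := lucas_step (2 ^ (K + 1) * a + R) (2 ^ (K + 1) * b + y)
    rw [hmodn, hmodk, hdivn, hdivk] at h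
    rw [h, ih a b (R / 2) (y / 2) (by omega) (by omega), lucas_step R y]
    ring

/-! ### Word sets -/

def WintS (L : ℕ) : Set (ℕ → Bool) := {w | ∃ r e, 1 ≤ e ∧ e + L ≤ r ∧ w = rowWordB L r e}

def WupS (n : ℕ) : Set (ℕ → Bool) := {w | ∃ R J, J ≤ R ∧ w = upWordB n R J}

def WtopS (n : ℕ) : Set (ℕ → Bool) := {w | ∃ R J, J ≤ R ∧ w = topWordB n R J}

lemma choose_six_two : ((Nat.choose 6 2 : ℕ) : Z2) = 1 := by decide
lemma choose_six_one : ((Nat.choose 6 1 : ℕ) : Z2) = 0 := by decide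

lemma parity_of_z2_eq {a b : ℕ} (h : (a : Z2) = (b : Z2)) : a % 2 = b % 2 :=
  (natCast_zmod2_eq_iff a b).mp h

lemma parity_zero_of_z2_zero {a : ℕ} (h : (a : Z2) = 0) : a % 2 = 0 := by
  have := parity_of_z2_eq (b := 0) (by simpa using h)
  simpa using this

lemma wup_eq_wint (n : ℕ) (hn : 1 ≤ n) : WupS n = WintS (2 * n - 1) := by
  ext w
  constructor
  · rintro ⟨R, J, hJ, rfl⟩
    have hP : R + n < 2 ^ (R + n) := Nat.lt_two_pow_self
    set P := 2 ^ (R + n) with hPdef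
    refine ⟨6 * P + R, 2 * P + J + 1 - n, by omega, by omega, ?_⟩
    funext t
    simp only [rowWordB, upWordB]
    rw [decide_eq_decide]
    by_cases ht : t < 2 * n - 1
    · by_cases hg : n - 1 ≤ J + t
      · have hyP : J + t - (n - 1) < P := by omega
        have hl := lucas_pow (R + n) 6 2 R (J + t - (n - 1)) (by omega) hyP
        rw [← hPdef] at hl
        have hpar : (P * 6 + R).choose (P * 2 + (J + t - (n - 1))) % 2
            = R.choose (J + t - (n - 1)) % 2 := by
          apply parity_of_z2_eq
          rw [hl, choose_six_two, one_mul]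
        rw [show (6 * P + R : ℕ) = P * 6 + R by ring,
          show 2 * P + J + 1 - n + t = P * 2 + (J + t - (n - 1)) by omega]
        constructor
        · rintro ⟨h1, h2, h3⟩
          exact ⟨by omega, by omega⟩
        · rintro ⟨h1, h2⟩
          exact ⟨ht, hg, by omega⟩
      · have hyP : P - (n - 1 - (J + t)) < P := by omega
        have hl := lucas_pow (R + n) 6 1 R (P - (n - 1 - (J + t))) (by omega) hyP
        rw [← hPdef] at hl
        have hpar : (P * 6 + R).choose (P * 1 + (P - (n - 1 - (J + t)))) % 2 = 0 := by
          apply parity_zero_of_z2_zero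
          rw [hl, choose_six_one, zero_mul]
        rw [show (6 * P + R : ℕ) = P * 6 + R by ring,
          show 2 * P + J + 1 - n + t = P * 1 + (P - (n - 1 - (J + t))) by omega]
        constructor
        · rintro ⟨h1, h2, h3⟩
          omega
        · rintro ⟨h1, h2⟩
          omega
    · constructor
      · rintro ⟨h1, h2, h3⟩; omega
      · rintro ⟨h1, h2⟩; omega
  · rintro ⟨r, e, he, hr, rfl⟩
    refine ⟨r, e + (n - 1), by omega, ?_⟩
    funext t
    simp only [rowWordB, upWordB]
    rw [decide_eq_decide]
    rw [show e + (n - 1) + t - (n - 1) = e + t by omega]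
    constructor
    · rintro ⟨h1, h2⟩
      exact ⟨h1, by omega, h2⟩
    · rintro ⟨h1, h2, h3⟩
      exact ⟨h1, h3⟩

lemma wtop_eq_wint (n : ℕ) (hn : 2 ≤ n) : WtopS n = WintS (2 * n - 2) := by
  ext w
  constructor
  · rintro ⟨R, J, hJ, rfl⟩
    have hP : R + n + 1 < 2 ^ (R + n + 1) := Nat.lt_two_pow_self
    set P := 2 ^ (R + n + 1) with hPdef
    refine ⟨6 * P + (R + 1), 2 * P + J + 2 - n, by omega, by omega, ?_⟩
    funext t
    simp only [rowWordB, topWordB]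
    rw [decide_eq_decide]
    by_cases ht : t < 2 * n - 2
    · by_cases hg : n - 2 ≤ J + t
      · have hyP : J + t - (n - 2) < P := by omega
        have hl := lucas_pow (R + n + 1) 6 2 (R + 1) (J + t - (n - 2)) (by omega) hyP
        rw [← hPdef] at hl
        have hpar : (P * 6 + (R + 1)).choose (P * 2 + (J + t - (n - 2))) % 2
            = (R + 1).choose (J + t - (n - 2)) % 2 := by
          apply parity_of_z2_eq
          rw [hl, choose_six_two, one_mul]
        rw [show (6 * P + (R + 1) : ℕ) = P * 6 + (R + 1) by ring,
          show 2 * P + J + 2 - n + t = P * 2 + (J + t - (n - 2)) by omega]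
        constructor
        · rintro ⟨h1, h2, h3⟩
          exact ⟨by omega, by omega⟩
        · rintro ⟨h1, h2⟩
          exact ⟨ht, hg, by omega⟩
      · have hyP : P - (n - 2 - (J + t)) < P := by omega
        have hl := lucas_pow (R + n + 1) 6 1 (R + 1) (P - (n - 2 - (J + t))) (by omega) hyP
        rw [← hPdef] at hl
        have hpar : (P * 6 + (R + 1)).choose (P * 1 + (P - (n - 2 - (J + t)))) % 2 = 0 := by
          apply parity_zero_of_z2_zero
          rw [hl, choose_six_one, zero_mul]
        rw [show (6 * P + (R + 1) : ℕ) = P * 6 + (R + 1) by ring,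
          show 2 * P + J + 2 - n + t = P * 1 + (P - (n - 2 - (J + t))) by omega]
        constructor
        · rintro ⟨h1, h2, h3⟩
          omega
        · rintro ⟨h1, h2⟩
          omega
    · constructor
      · rintro ⟨h1, h2, h3⟩; omega
      · rintro ⟨h1, h2⟩; omega
  · rintro ⟨r, e, he, hr, rfl⟩
    refine ⟨r - 1, e + (n - 2), by omega, ?_⟩
    funext t
    simp only [rowWordB, topWordB]
    rw [show r - 1 + 1 = r by omega]
    rw [decide_eq_decide]
    rw [show e + (n - 2) + t - (n - 2) = e + t by omega]
    constructor
    · rintro ⟨h1, h2⟩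
      exact ⟨h1, by omega, h2⟩
    · rintro ⟨h1, h2, h3⟩
      exact ⟨h1, h3⟩

/-! ### Reading the word off a downward pattern -/

lemma read_down_word (m r e : ℕ) (he : 1 ≤ e) (hm : 2 ≤ m) :
    readDown (downPattern m r (2 * e - 1)) = rowWordB (m - 1) r e := by
  funext t
  simp only [readDown, downPattern, rowWordB]
  by_cases ht : t < m - 1
  · rw [if_pos (⟨by omega, by omega⟩ : 0 < m ∧ 2 * t + 1 ≤ 2 * (m - 1 - 0))]
    rw [show 2 * e - 1 + 2 * 0 + (2 * t + 1) = 2 * (e + t) by omega, filled_even]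
    simp [ht]
  · rw [if_neg (by omega : ¬(0 < m ∧ 2 * t + 1 ≤ 2 * (m - 1 - 0)))]
    simp [ht]

lemma image_readDown (m : ℕ) (hm : 2 ≤ m) : readDown '' Pdown m = WintS (m - 1) := by
  ext w
  constructor
  · rintro ⟨p, ⟨r, c, hc, hcr, rfl⟩, rfl⟩
    obtain ⟨e, he, rfl⟩ : ∃ e, 1 ≤ e ∧ c = 2 * e - 1 := ⟨(c + 1) / 2, by omega, by omega⟩
    exact ⟨r, e, he, by omega, read_down_word m r e he hm⟩
  · rintro ⟨r, e, he, hr, rfl⟩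
    exact ⟨downPattern m r (2 * e - 1), ⟨r, 2 * e - 1, by omega, by omega, rfl⟩,
      read_down_word m r e he hm⟩

lemma injOn_readDown (m : ℕ) (hm : 2 ≤ m) : Set.InjOn readDown (Pdown m) := by
  rintro p ⟨r, c, hc, hcr, rfl⟩ p' ⟨r', c', hc', hcr', rfl⟩ h
  obtain ⟨e, he, rfl⟩ : ∃ e, 1 ≤ e ∧ c = 2 * e - 1 := ⟨(c + 1) / 2, by omega, by omega⟩
  obtain ⟨e', he', rfl⟩ : ∃ e', 1 ≤ e' ∧ c' = 2 * e' - 1 := ⟨(c' + 1) / 2, by omega, by omega⟩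
  rw [← FDown_eval m r e he hm, ← FDown_eval m r' e' he' hm,
    ← read_down_word m r e he hm, ← read_down_word m r' e' he' hm, h]

/-! ### Images for up and topcut -/

lemma image_FUp (n : ℕ) (hn : 1 ≤ n) : FUp n '' WupS n = Pup n := by
  ext p
  constructor
  · rintro ⟨w, ⟨R, J, hJ, rfl⟩, rfl⟩
    exact ⟨R, 2 * J, by omega, by omega, FUp_eval n R J hn⟩
  · rintro ⟨R, c, hc, hcR, rfl⟩
    obtain ⟨J, rfl⟩ : ∃ J, c = 2 * J := ⟨c / 2, by omega⟩
    exact ⟨upWordB n R J, ⟨R, J, by omega, rfl⟩, FUp_eval n R J hn⟩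

lemma injOn_FUp (n : ℕ) (hn : 1 ≤ n) : Set.InjOn (FUp n) (WupS n) := by
  rintro w ⟨R, J, hJ, rfl⟩ w' ⟨R', J', hJ', rfl⟩ h
  apply up_word_inj n R J R' J' hn
  rw [← FUp_eval n R J hn, ← FUp_eval n R' J' hn]
  exact h

lemma image_FTop (n : ℕ) (hn : 2 ≤ n) : FTop n '' WtopS n = PtopCut n := by
  ext p
  constructor
  · rintro ⟨w, ⟨R, J, hJ, rfl⟩, rfl⟩
    exact ⟨R, 2 * J, by omega, by omega, FTop_eval n R J hn⟩
  · rintro ⟨R, c, hc, hcR, rfl⟩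
    obtain ⟨J, rfl⟩ : ∃ J, c = 2 * J := ⟨c / 2, by omega⟩
    exact ⟨topWordB n R J, ⟨R, J, by omega, rfl⟩, FTop_eval n R J hn⟩

lemma injOn_FTop (n : ℕ) (hn : 2 ≤ n) : Set.InjOn (FTop n) (WtopS n) := by
  rintro w ⟨R, J, hJ, rfl⟩ w' ⟨R', J', hJ', rfl⟩ h
  apply top_word_inj n R J R' J' hn
  rw [← FTop_eval n R J hn, ← FTop_eval n R' J' hn]
  exact h

theorem sierpinski_down_up_connection (n : ℕ) (hn : 2 ≤ n) :
    (Pdown (2 * n)).ncard = (Pup n).ncard ∧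
    (Pdown (2 * n - 1)).ncard = (PtopCut n).ncard := by
  have hn1 : 1 ≤ n := by omega
  constructor
  · calc (Pdown (2 * n)).ncard
        = (readDown '' Pdown (2 * n)).ncard :=
          (Set.ncard_image_of_injOn (injOn_readDown (2 * n) (by omega))).symm
      _ = (WintS (2 * n - 1)).ncard := by rw [image_readDown (2 * n) (by omega)]
      _ = (WupS n).ncard := by rw [← wup_eq_wint n hn1]
      _ = (FUp n '' WupS n).ncard := (Set.ncard_image_of_injOn (injOn_FUp n hn1)).symm
      _ = (Pup n).ncard := by rw [image_FUp n hn1]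
  · calc (Pdown (2 * n - 1)).ncard
        = (readDown '' Pdown (2 * n - 1)).ncard :=
          (Set.ncard_image_of_injOn (injOn_readDown (2 * n - 1) (by omega))).symm
      _ = (WintS (2 * n - 1 - 1)).ncard := by rw [image_readDown (2 * n - 1) (by omega)]
      _ = (WintS (2 * n - 2)).ncard := by rw [show 2 * n - 1 - 1 = 2 * n - 2 by omega]
      _ = (WtopS n).ncard := by rw [← wtop_eq_wint n hn]
      _ = (FTop n '' WtopS n).ncard := (Set.ncard_image_of_injOn (injOn_FTop n hn)).symm
      _ = (PtopCut n).ncard := by rw [image_FTop n hn]
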